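/- Let (θ_j) be a sequence of positive reals with Σ_{j=1}^∞ j·θ_j < ∞, let (a_n) be a sequence of nonnegative reals, and let (b_n) be a nonnegative sequence with the property: for every j, the set B_j = {n : θ_{j+1} < b_n ≤ θ_j} satisfies Σ_{n ∈ B_j, n ≥ j} a_n ≤ C and Σ_{n ∈ B_j, n < j} a_n ≤ (j-1)·C. Then Σ_{n=1}^∞ a_n b_n ≤ C · Σ_{j=1}^∞ j·θ_j, provided b_n ≤ θ_1 for all n. -/

import Mathlib

/-- summation scheme of Proposition 3.2 / Lemma 3.6: Let
`(θ_j)_{j ≥ 1}` be positive reals with `Σ_j j θ_j < ∞`, let `(a_n)` be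
nonnegative reals and `(b_n)` nonnegative with `b_n ≤ θ_1` for all `n`, and
suppose that for every `j ≥ 1` the level set `B_j = {n : θ_{j+1} < b_n ≤ θ_j}`
satisfies `Σ_{n ∈ B_j, n ≥ j} a_n ≤ C` and `Σ_{n ∈ B_j, n < j} a_n ≤ (j-1) C`
(in the sense of finite partial sums).  Then
`Σ_n a_n b_n ≤ C Σ_j j θ_j`. -/
theorem stmt17 (θ a b : ℕ → ℝ) (C : ℝ) (hC : 0 ≤ C)
    (hθ : ∀ j, 1 ≤ j → 0 < θ j)
    (hsum : Summable (fun j : ℕ => (j : ℝ) * θ j))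
    (ha : ∀ n, 0 ≤ a n) (hb : ∀ n, 0 ≤ b n) (hb1 : ∀ n, b n ≤ θ 1)
    (hlevel1 : ∀ j, 1 ≤ j → ∀ F : Finset ℕ,
      (∀ n ∈ F, θ (j + 1) < b n ∧ b n ≤ θ j ∧ j ≤ n) → ∑ n ∈ F, a n ≤ C)
    (hlevel2 : ∀ j, 1 ≤ j → ∀ F : Finset ℕ,
      (∀ n ∈ F, θ (j + 1) < b n ∧ b n ≤ θ j ∧ n < j) →
        ∑ n ∈ F, a n ≤ ((j : ℝ) - 1) * C) :
    ∀ F : Finset ℕ, ∑ n ∈ F, a n * b n ≤ C * ∑' j : ℕ, (j : ℝ) * θ j := by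
  classical
  intro F
  have hterm : Filter.Tendsto (fun j : ℕ => (j : ℝ) * θ j) Filter.atTop (nhds 0) :=
    hsum.tendsto_atTop_zero
  have hnn : ∀ i : ℕ, 0 ≤ (i : ℝ) * θ i := by
    intro i
    rcases Nat.eq_zero_or_pos i with h | h
    · simp [h]
    · exact mul_nonneg (by positivity) (hθ i h).le
  -- existence of a level for each n with positive b n
  have key : ∀ n, 0 < b n → ∃ j, 1 ≤ j ∧ θ (j + 1) < b n ∧ b n ≤ θ j := by
    intro n hbn
    obtain ⟨N, hN⟩ := Filter.eventually_atTop.mp (hterm.eventually (gt_mem_nhds hbn))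
    set M := max N 1 with hM
    have hsmall : ∀ j, M ≤ j → θ j < b n := by
      intro j hj
      have hj1 : 1 ≤ j := le_trans (le_max_right N 1) hj
      have : θ j ≤ (j : ℝ) * θ j :=
        le_mul_of_one_le_left (hθ j hj1).le (by exact_mod_cast hj1)
      exact lt_of_le_of_lt this (hN j (le_trans (le_max_left N 1) hj))
    set P : ℕ → Prop := fun j => b n ≤ θ j with hP
    set jl := Nat.findGreatest P M with hjl
    have h1M : (1 : ℕ) ≤ M := le_max_right N 1
    have hP1 : P 1 := hb1 n
    have h1 : 1 ≤ jl := Nat.le_findGreatest h1M hP1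
    have hspec : P jl := Nat.findGreatest_spec h1M hP1
    refine ⟨jl, h1, ?_, hspec⟩
    by_cases hc : jl + 1 ≤ M
    · have := Nat.findGreatest_is_greatest (P := P) (n := M) (k := jl + 1)
        (by omega) hc
      exact lt_of_not_ge this
    · have hle : jl ≤ M := Nat.findGreatest_le M
      exact hsmall (jl + 1) (by omega)
  choose! jf hjf1 hjf2 hjf3 using key
  set F' := F.filter (fun n => 0 < b n) with hF'
  have step1 : ∑ n ∈ F, a n * b n = ∑ n ∈ F', a n * b n := by
    rw [hF', Finset.sum_filter_of_ne]
    intro n _ hne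
    rcases lt_or_eq_of_le (hb n) with h | h
    · exact h
    · exact absurd (by rw [← h, mul_zero]) hne
  have step2 : ∑ n ∈ F', a n * b n ≤ ∑ n ∈ F', a n * θ (jf n) := by
    refine Finset.sum_le_sum fun n hn => ?_
    have hbn : 0 < b n := (Finset.mem_filter.mp hn).2
    exact mul_le_mul_of_nonneg_left (hjf3 n hbn) (ha n)
  set J := F'.image jf with hJ
  have step3 : ∑ n ∈ F', a n * θ (jf n)
      = ∑ j ∈ J, ∑ n ∈ F'.filter (fun n => jf n = j), a n * θ (jf n) := by
    exact (Finset.sum_fiberwise_of_maps_to (fun n hn => Finset.mem_image_of_mem jf hn) _).symm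
  have step4 : ∀ j ∈ J, ∑ n ∈ F'.filter (fun n => jf n = j), a n * θ (jf n)
      ≤ C * ((j : ℝ) * θ j) := by
    intro j hj
    obtain ⟨m, hm, hmj⟩ := Finset.mem_image.mp hj
    have hbm : 0 < b m := (Finset.mem_filter.mp hm).2
    have hj1 : 1 ≤ j := hmj ▸ hjf1 m hbm
    set G := F'.filter (fun n => jf n = j) with hG
    have hGb : ∀ n ∈ G, 0 < b n ∧ jf n = j := by
      intro n hn
      have h' := Finset.mem_filter.mp hn
      exact ⟨(Finset.mem_filter.mp h'.1).2, h'.2⟩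
    have heq : ∑ n ∈ G, a n * θ (jf n) = θ j * ∑ n ∈ G, a n := by
      rw [Finset.mul_sum]
      refine Finset.sum_congr rfl fun n hn => ?_
      rw [(hGb n hn).2, mul_comm]
    have hsplit : ∑ n ∈ G, a n
        = ∑ n ∈ G.filter (fun n => j ≤ n), a n
          + ∑ n ∈ G.filter (fun n => ¬ j ≤ n), a n :=
      (Finset.sum_filter_add_sum_filter_not G _ _).symm
    have hs1 : ∑ n ∈ G.filter (fun n => j ≤ n), a n ≤ C := by
      refine hlevel1 j hj1 _ fun n hn => ?_
      have h' := Finset.mem_filter.mp hn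
      have hb' := hGb n h'.1
      exact ⟨hb'.2 ▸ hjf2 n hb'.1, hb'.2 ▸ hjf3 n hb'.1, h'.2⟩
    have hs2 : ∑ n ∈ G.filter (fun n => ¬ j ≤ n), a n ≤ ((j : ℝ) - 1) * C := by
      refine hlevel2 j hj1 _ fun n hn => ?_
      have h' := Finset.mem_filter.mp hn
      have hb' := hGb n h'.1
      exact ⟨hb'.2 ▸ hjf2 n hb'.1, hb'.2 ▸ hjf3 n hb'.1, by omega⟩
    have hGsum : ∑ n ∈ G, a n ≤ (j : ℝ) * C := by
      rw [hsplit]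
      calc _ ≤ C + ((j : ℝ) - 1) * C := add_le_add hs1 hs2
        _ = (j : ℝ) * C := by ring
    calc ∑ n ∈ G, a n * θ (jf n) = θ j * ∑ n ∈ G, a n := heq
      _ ≤ θ j * ((j : ℝ) * C) :=
          mul_le_mul_of_nonneg_left hGsum (hθ j hj1).le
      _ = C * ((j : ℝ) * θ j) := by ring
  have step5 : ∑ j ∈ J, C * ((j : ℝ) * θ j) ≤ C * ∑' j : ℕ, (j : ℝ) * θ j := by
    rw [← Finset.mul_sum]
    exact mul_le_mul_of_nonneg_left (Summable.sum_le_tsum J (fun i _ => hnn i) hsum) hC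
  calc ∑ n ∈ F, a n * b n = ∑ n ∈ F', a n * b n := step1
    _ ≤ ∑ n ∈ F', a n * θ (jf n) := step2
    _ = ∑ j ∈ J, ∑ n ∈ F'.filter (fun n => jf n = j), a n * θ (jf n) := step3
    _ ≤ ∑ j ∈ J, C * ((j : ℝ) * θ j) := Finset.sum_le_sum step4
    _ ≤ C * ∑' j : ℕ, (j : ℝ) * θ j := step5
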